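/- Let C ≤ D be diagrams in the n×n grid and let F_max be the flagged filling of D with content C of lexicographically maximal weight. Then the monomial y^{F_max} = Π_j Π_{d ∈ D_j} y_{(F_max)_j(d), d} appears with nonzero coefficient in the polynomial det(Y^C_D) = Π_{j=1}^n det(Y^{C_j}_{D_j}); in fact F_max is the unique flagged filling of D with content C whose monomial equals y^{F_max}, so its coefficient is ±1. -/
import Mathlib


open Finset

/-- The Gale order on finite subsets of `Fin n` (for equal cardinalities):
`C ≤ D` iff they have the same cardinality and the `i`-th smallest element of `C`
is at most the `i`-th smallest element of `D` for every `i`. -/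
def Gale {n : ℕ} (C D : Finset (Fin n)) : Prop :=
  ∃ h : C.card = D.card, ∀ i : Fin C.card,
    C.orderEmbOfFin rfl i ≤ D.orderEmbOfFin h.symm i

/-- The generic `n × n` upper-triangular matrix `Y`, with entry `y_{ij}` (an
indeterminate) when `i ≤ j` and `0` below the diagonal. -/
noncomputable def Ygen (n : ℕ) : Matrix (Fin n) (Fin n) (MvPolynomial (Fin n × Fin n) ℂ) :=
  fun i j => if i ≤ j then MvPolynomial.X (i, j) else 0

/-- `det (Y^R_S)`: the determinant of the submatrix of `Y` with rows indexed by `R`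
(in increasing order) and columns indexed by `S` (in increasing order); by convention,
`0` if the cardinalities differ. -/
noncomputable def colDet {n : ℕ} (R S : Finset (Fin n)) : MvPolynomial (Fin n × Fin n) ℂ :=
  if h : R.card = S.card then
    Matrix.det (Matrix.of fun a b : Fin R.card =>
      Ygen n (R.orderEmbOfFin rfl a) (S.orderEmbOfFin h.symm b))
  else 0

/-- A flagged filling of a diagram `D = (D_1,…,D_n)` with content `C = (C_1,…,C_n)`:
for each column `j`, a bijection `F j : D_j → C_j` with `F j d ≤ d`. -/
def FlaggedD {n : ℕ} {D C : Fin n → Finset (Fin n)}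
    (F : ∀ j, {x // x ∈ D j} ≃ {x // x ∈ C j}) : Prop :=
  ∀ j, ∀ d : {x // x ∈ D j}, ((F j) d : Fin n) ≤ (d : Fin n)

/-- The weight of a flagged filling: `wt F i` is the sum of the entries (as elements of
`{1,…,n}`, i.e. `val + 1`) placed in row `i`. -/
def wt {n : ℕ} {D C : Fin n → Finset (Fin n)}
    (F : ∀ j, {x // x ∈ D j} ≃ {x // x ∈ C j}) (i : Fin n) : ℕ :=
  ∑ j : Fin n, if h : i ∈ D j then (((F j) ⟨i, h⟩ : Fin n) : ℕ) + 1 else 0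

/-- Strict lexicographic comparison of weight vectors (row `1` most significant). -/
def LexGT {n : ℕ} (f g : Fin n → ℕ) : Prop :=
  ∃ i : Fin n, g i < f i ∧ ∀ t : Fin n, t < i → f t = g t

/-- The monomial `y^F = ∏_j ∏_{d ∈ D_j} y_{F_j(d), d}` of a flagged filling. -/
noncomputable def ymon {n : ℕ} {D C : Fin n → Finset (Fin n)}
    (F : ∀ j, {x // x ∈ D j} ≃ {x // x ∈ C j}) : MvPolynomial (Fin n × Fin n) ℂ :=
  ∏ j : Fin n, ∏ d ∈ (D j).attach, MvPolynomial.X (((F j) d : Fin n), (d : Fin n))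

/-- `det(Y^C_D) = ∏_j det(Y^{C_j}_{D_j})` for diagrams `C ≤ D`. -/
noncomputable def diagDet {n : ℕ} (C D : Fin n → Finset (Fin n)) :
    MvPolynomial (Fin n × Fin n) ℂ :=
  ∏ j : Fin n, colDet (C j) (D j)


namespace MaxMono

open MvPolynomial

variable {n : ℕ}

lemma prod_monomial {ι : Type*} (s : Finset ι) (f : ι → ((Fin n × Fin n) →₀ ℕ)) :
    ∏ i ∈ s, (MvPolynomial.monomial (f i) (1 : ℂ)) =
      MvPolynomial.monomial (∑ i ∈ s, f i) (1 : ℂ) := by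
  induction s using Finset.cons_induction with
  | empty => simp
  | cons a s ha ih =>
      rw [Finset.prod_cons, Finset.sum_cons, ih, MvPolynomial.monomial_mul, one_mul]

/-- The exponent vector of the monomial of a filling. -/
noncomputable def eF {D C : Fin n → Finset (Fin n)}
    (F : ∀ j, {x // x ∈ D j} ≃ {x // x ∈ C j}) : (Fin n × Fin n) →₀ ℕ :=
  ∑ j : Fin n, ∑ d ∈ (D j).attach, Finsupp.single (((F j) d : Fin n), (d : Fin n)) 1

lemma ymon_eq {D C : Fin n → Finset (Fin n)}
    (F : ∀ j, {x // x ∈ D j} ≃ {x // x ∈ C j}) :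
    ymon F = MvPolynomial.monomial (eF F) (1 : ℂ) := by
  rw [ymon, eF, ← prod_monomial]
  exact Finset.prod_congr rfl fun j _ => prod_monomial _ _

lemma wt_eq {D C : Fin n → Finset (Fin n)}
    (F : ∀ j, {x // x ∈ D j} ≃ {x // x ∈ C j}) (i : Fin n) :
    wt F i = ∑ a : Fin n, ((a : ℕ) + 1) * eF F (a, i) := by
  have hap : ∀ a : Fin n, eF F (a, i) = ∑ j : Fin n, ∑ d ∈ (D j).attach,
      (if ((F j d : Fin n), (d : Fin n)) = (a, i) then 1 else 0) := by
    intro a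
    rw [eF, Finsupp.finset_sum_apply]
    refine Finset.sum_congr rfl fun j _ => ?_
    rw [Finsupp.finset_sum_apply]
    exact Finset.sum_congr rfl fun d _ => Finsupp.single_apply
  rw [wt]
  have swap : ∑ a : Fin n, ((a : ℕ) + 1) * eF F (a, i)
      = ∑ j : Fin n, ∑ a : Fin n, ((a : ℕ) + 1) * ∑ d ∈ (D j).attach,
        (if ((F j d : Fin n), (d : Fin n)) = (a, i) then 1 else 0) := by
    rw [← Finset.sum_comm]
    refine Finset.sum_congr rfl fun a _ => ?_
    rw [hap a, Finset.mul_sum]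
  rw [swap]
  refine Finset.sum_congr rfl fun j _ => ?_
  by_cases h : i ∈ D j
  · rw [dif_pos h]
    have hd : ∀ a : Fin n, (∑ d ∈ (D j).attach,
        if ((F j d : Fin n), (d : Fin n)) = (a, i) then (1:ℕ) else 0)
        = if ((F j ⟨i, h⟩ : Fin n)) = a then 1 else 0 := by
      intro a
      rw [Finset.sum_eq_single (⟨i, h⟩ : {x // x ∈ D j})]
      · simp [Prod.ext_iff]
      · intro d _ hne
        rw [if_neg]
        intro hc
        exact hne (Subtype.ext (by simpa using congrArg Prod.snd hc))
      · intro hmem; exact absurd (Finset.mem_attach _ _) hmem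
    symm
    calc ∑ a : Fin n, ((a : ℕ) + 1) * ∑ d ∈ (D j).attach,
          (if ((F j d : Fin n), (d : Fin n)) = (a, i) then 1 else 0)
        = ∑ a : Fin n, ((a : ℕ) + 1) *
            (if ((F j ⟨i, h⟩ : Fin n)) = a then 1 else 0) :=
          Finset.sum_congr rfl fun a _ => by rw [hd]
      _ = _ := by simp [mul_ite]
  · rw [dif_neg h]
    symm
    refine Finset.sum_eq_zero fun a _ => ?_
    refine mul_eq_zero_of_right _ (Finset.sum_eq_zero fun d _ => ?_)
    rw [if_neg]
    intro hc
    exact h (by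
      have : (d : Fin n) = i := by simpa using congrArg Prod.snd hc
      rw [← this]; exact d.2)

/-- Reindexing permutations of `Fin R.card` as bijections from `S` to `R`. -/
noncomputable def colEquiv (R S : Finset (Fin n)) (h : R.card = S.card) :
    Equiv.Perm (Fin R.card) ≃ ({x // x ∈ S} ≃ {x // x ∈ R}) :=
  Equiv.equivCongr (S.orderIsoOfFin h.symm).toEquiv (R.orderIsoOfFin rfl).toEquiv

lemma colDet_expand (R S : Finset (Fin n)) (h : R.card = S.card) :
    colDet R S = ∑ F : {x // x ∈ S} ≃ {x // x ∈ R},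
      ((Equiv.Perm.sign ((colEquiv R S h).symm F) : ℤ) : MvPolynomial (Fin n × Fin n) ℂ) *
      (if ∀ d : {x // x ∈ S}, (F d : Fin n) ≤ (d : Fin n) then
        MvPolynomial.monomial
          (∑ d ∈ S.attach, Finsupp.single ((F d : Fin n), (d : Fin n)) 1) (1 : ℂ)
      else 0) := by
  unfold colDet
  rw [dif_pos h, Matrix.det_apply']
  refine Fintype.sum_equiv (colEquiv R S h) _ _ fun σ => ?_
  rw [Equiv.symm_apply_apply]
  congr 1
  set F := colEquiv R S h σ with hF
  have hFb : ∀ b : Fin R.card, F ((S.orderIsoOfFin h.symm) b) = (R.orderIsoOfFin rfl) (σ b) := by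
    intro b
    simp [hF, colEquiv]
  have hprod : (∏ b, (Matrix.of fun a b : Fin R.card =>
      Ygen n (R.orderEmbOfFin rfl a) (S.orderEmbOfFin h.symm b)) (σ b) b)
      = ∏ d ∈ S.attach, Ygen n ((F d : Fin n)) ((d : Fin n)) := by
    rw [← Finset.univ_eq_attach, ← Equiv.prod_comp (S.orderIsoOfFin h.symm).toEquiv
      (fun d => Ygen n ((F d : Fin n)) ((d : Fin n)))]
    refine Finset.prod_congr rfl fun b _ => ?_
    rw [Matrix.of_apply]
    simp only [RelIso.coe_fn_toEquiv]
    rw [hFb b, Finset.coe_orderIsoOfFin_apply, Finset.coe_orderIsoOfFin_apply]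
  rw [hprod]
  by_cases hfl : ∀ d : {x // x ∈ S}, (F d : Fin n) ≤ (d : Fin n)
  · rw [if_pos hfl, ← prod_monomial]
    refine Finset.prod_congr rfl fun d _ => ?_
    show (if ((F d : Fin n)) ≤ (d : Fin n) then _ else 0) = _
    rw [if_pos (hfl d)]
    rfl
  · rw [if_neg hfl]
    push_neg at hfl
    obtain ⟨d, hd⟩ := hfl
    refine Finset.prod_eq_zero (Finset.mem_attach S d) ?_
    show (if ((F d : Fin n)) ≤ (d : Fin n) then _ else 0) = 0
    rw [if_neg (not_le_of_gt hd)]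

end MaxMono

/-- the monomial of the maximal-weight flagged filling `Fmax` appears in
`det(Y^C_D) = ∏_j det(Y^{C_j}_{D_j})` with coefficient `±1`; indeed `Fmax` is the unique
flagged filling with monomial `y^{Fmax}`. -/
theorem max_monomial_appears {n : ℕ} (C D : Fin n → Finset (Fin n))
    (hG : ∀ j, Gale (C j) (D j))
    (Fmax : ∀ j, {x // x ∈ D j} ≃ {x // x ∈ C j})
    (hflag : FlaggedD Fmax)
    (hmax : ∀ F : ∀ j, {x // x ∈ D j} ≃ {x // x ∈ C j},
      FlaggedD F → F ≠ Fmax → LexGT (wt Fmax) (wt F)) :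
    (∀ F : ∀ j, {x // x ∈ D j} ≃ {x // x ∈ C j},
        FlaggedD F → ymon F = ymon Fmax → F = Fmax) ∧
    ∃ e : (Fin n × Fin n) →₀ ℕ,
      ymon Fmax = MvPolynomial.monomial e (1 : ℂ) ∧
      (MvPolynomial.coeff e (diagDet C D) = 1 ∨
        MvPolynomial.coeff e (diagDet C D) = -1) := by
  classical
  have huniq : ∀ F : ∀ j, {x // x ∈ D j} ≃ {x // x ∈ C j},
      FlaggedD F → ymon F = ymon Fmax → F = Fmax := by
    intro F hF hy
    by_contra hne
    obtain ⟨i, hlt, -⟩ := hmax F hF hne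
    rw [MaxMono.ymon_eq, MaxMono.ymon_eq] at hy
    have he : MaxMono.eF F = MaxMono.eF Fmax := by
      rcases (MvPolynomial.monomial_eq_monomial_iff _ _ _ _).1 hy with ⟨h1, -⟩ | ⟨h1, -⟩
      · exact h1
      · exact absurd h1 one_ne_zero
    have hw : wt F i = wt Fmax i := by rw [MaxMono.wt_eq, MaxMono.wt_eq, he]
    rw [hw] at hlt
    exact lt_irrefl _ hlt
  refine ⟨huniq, MaxMono.eF Fmax, MaxMono.ymon_eq Fmax, ?_⟩
  have hcard : ∀ j, (C j).card = (D j).card := fun j => (hG j).choose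
  set e := MaxMono.eF Fmax with he
  -- expand the product of determinants as a sum over tuples of bijections
  set term : (∀ j, {x // x ∈ D j} ≃ {x // x ∈ C j}) → Fin n → MvPolynomial (Fin n × Fin n) ℂ :=
    fun F j =>
      ((Equiv.Perm.sign ((MaxMono.colEquiv (C j) (D j) (hcard j)).symm (F j)) : ℤ) :
          MvPolynomial (Fin n × Fin n) ℂ) *
      (if ∀ d : {x // x ∈ D j}, ((F j) d : Fin n) ≤ (d : Fin n) then
        MvPolynomial.monomial
          (∑ d ∈ (D j).attach, Finsupp.single (((F j) d : Fin n), (d : Fin n)) 1) (1 : ℂ)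
      else 0) with hterm
  have hexp : diagDet C D = ∑ F : (∀ j, {x // x ∈ D j} ≃ {x // x ∈ C j}), ∏ j, term F j := by
    rw [diagDet]
    rw [Finset.prod_congr rfl fun j _ => MaxMono.colDet_expand (C j) (D j) (hcard j)]
    exact Fintype.prod_sum _
  -- the coefficient of `e` in the term of a flagged filling
  have hflc : ∀ F : (∀ j, {x // x ∈ D j} ≃ {x // x ∈ C j}), FlaggedD F →
      MvPolynomial.coeff e (∏ j, term F j) =
        (((∏ j, Equiv.Perm.sign ((MaxMono.colEquiv (C j) (D j) (hcard j)).symm (F j)) : ℤˣ) : ℤ) : ℂ)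
          * (if MaxMono.eF F = e then 1 else 0) := by
    intro F hfl
    have hpr : ∏ j, term F j =
        ((((∏ j, Equiv.Perm.sign ((MaxMono.colEquiv (C j) (D j) (hcard j)).symm (F j)) : ℤˣ) : ℤ) :
            MvPolynomial (Fin n × Fin n) ℂ)) *
          MvPolynomial.monomial (MaxMono.eF F) (1 : ℂ) := by
      rw [hterm, Finset.prod_mul_distrib]
      congr 1
      · push_cast
        rfl
      · rw [Finset.prod_congr rfl fun j _ => if_pos (hfl j)]
        rw [MaxMono.prod_monomial]
        rfl
    rw [hpr]
    rw [show ((((∏ j, Equiv.Perm.sign ((MaxMono.colEquiv (C j) (D j) (hcard j)).symm (F j)) : ℤˣ) : ℤ) :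
            MvPolynomial (Fin n × Fin n) ℂ))
        = MvPolynomial.C
            ((((∏ j, Equiv.Perm.sign ((MaxMono.colEquiv (C j) (D j) (hcard j)).symm (F j)) : ℤˣ) : ℤ) : ℂ))
      from (map_intCast (MvPolynomial.C : ℂ →+* MvPolynomial (Fin n × Fin n) ℂ) _).symm]
    rw [MvPolynomial.coeff_C_mul, MvPolynomial.coeff_monomial]
  have hsum : MvPolynomial.coeff e (diagDet C D) =
      MvPolynomial.coeff e (∏ j, term Fmax j) := by
    rw [hexp, MvPolynomial.coeff_sum]
    refine Finset.sum_eq_single_of_mem Fmax (Finset.mem_univ _) fun F _ hne => ?_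
    by_cases hfl : FlaggedD F
    · rw [hflc F hfl, if_neg, mul_zero]
      intro hh
      exact hne (huniq F hfl (by rw [MaxMono.ymon_eq, MaxMono.ymon_eq, hh, he]))
    · have : ∃ j, ¬ ∀ d : {x // x ∈ D j}, ((F j) d : Fin n) ≤ (d : Fin n) := by
        by_contra hc
        push_neg at hc
        exact hfl hc
      obtain ⟨j, hj⟩ := this
      rw [Finset.prod_eq_zero (Finset.mem_univ j) (by simp only [hterm, if_neg hj, mul_zero]),
        MvPolynomial.coeff_zero]
  rw [hsum, hflc Fmax hflag, if_pos rfl, mul_one]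
  rcases Int.units_eq_one_or (∏ j, Equiv.Perm.sign ((MaxMono.colEquiv (C j) (D j) (hcard j)).symm (Fmax j))) with hu | hu
  · left; rw [hu]; norm_num
  · right; rw [hu]; norm_num
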